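/- A graph G contains no independent set of size 3 if and only if the complement of G contains no triangle; for such a graph, χ(G) = |V(G)| - ν(complement of G), where ν denotes the maximum matching number. -/

import Mathlib

open SimpleGraph

/-- The maximum number of pairwise disjoint edges of `H`. -/
noncomputable def matchingNumber {V : Type*} (H : SimpleGraph V) : ℕ :=
  sSup {k : ℕ | ∃ M : Finset (Sym2 V), M.card = k ∧ (↑M : Set (Sym2 V)) ⊆ H.edgeSet ∧
    (↑M : Set (Sym2 V)).Pairwise fun e e' => ∀ v : V, ¬ (v ∈ e ∧ v ∈ e')}

private lemma sum_le_card_add_card {α : Type*} [DecidableEq α] {s2 s : Finset α} (h : s2 ⊆ s)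
    (f : α → ℕ) (h2 : ∀ b ∈ s2, f b ≤ 2) (h1 : ∀ b ∈ s \ s2, f b ≤ 1) :
    ∑ b ∈ s, f b ≤ s.card + s2.card := by
  rw [← Finset.sum_sdiff h]
  calc ∑ b ∈ s \ s2, f b + ∑ b ∈ s2, f b
      ≤ ∑ _b ∈ s \ s2, 1 + ∑ _b ∈ s2, 2 :=
        Nat.add_le_add (Finset.sum_le_sum h1) (Finset.sum_le_sum h2)
    _ = (s \ s2).card + s2.card * 2 := by
        rw [Finset.sum_const, Finset.sum_const]; simp [Nat.mul_comm]
    _ ≤ s.card + s2.card := by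
        have := Finset.card_sdiff_add_card_eq_card h
        omega

private lemma card_add_card_le_sum {α : Type*} [DecidableEq α] {s2 s : Finset α} (h : s2 ⊆ s)
    (f : α → ℕ) (h2 : ∀ b ∈ s2, 2 ≤ f b) (h1 : ∀ b ∈ s \ s2, 1 ≤ f b) :
    s.card + s2.card ≤ ∑ b ∈ s, f b := by
  rw [← Finset.sum_sdiff h]
  calc s.card + s2.card = (s \ s2).card + s2.card * 2 := by
        have := Finset.card_sdiff_add_card_eq_card h
        omega
    _ = ∑ _b ∈ s \ s2, 1 + ∑ _b ∈ s2, 2 := by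
        rw [Finset.sum_const, Finset.sum_const]; simp [Nat.mul_comm]
    _ ≤ ∑ b ∈ s \ s2, f b + ∑ b ∈ s2, f b :=
        Nat.add_le_add (Finset.sum_le_sum h1) (Finset.sum_le_sum h2)

/-- A graph has no independent set of size 3 iff its complement is
triangle-free, and for such a graph `χ(G) = |V(G)| - ν(Gᶜ)`. -/
theorem chromaticNumber_of_no_independent_triple {V : Type*} [Fintype V]
    (G : SimpleGraph V) :
    ((¬ ∃ a b c : V, a ≠ b ∧ a ≠ c ∧ b ≠ c ∧
        ¬ G.Adj a b ∧ ¬ G.Adj a c ∧ ¬ G.Adj b c) ↔ Gᶜ.CliqueFree 3) ∧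
      (Gᶜ.CliqueFree 3 →
        G.chromaticNumber = (↑(Fintype.card V - matchingNumber Gᶜ) : ℕ∞)) := by
  classical
  have hiff : (¬ ∃ a b c : V, a ≠ b ∧ a ≠ c ∧ b ≠ c ∧
      ¬ G.Adj a b ∧ ¬ G.Adj a c ∧ ¬ G.Adj b c) ↔ Gᶜ.CliqueFree 3 := by
    constructor
    · intro h s hs
      rw [is3Clique_iff] at hs
      obtain ⟨a, b, c, hab, hac, hbc, -⟩ := hs
      exact h ⟨a, b, c, hab.ne, hac.ne, hbc.ne, hab.2, hac.2, hbc.2⟩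
    · rintro h ⟨a, b, c, hab, hac, hbc, nab, nac, nbc⟩
      exact h {a, b, c} (is3Clique_triple_iff.2 ⟨⟨hab, nab⟩, ⟨hac, nac⟩, ⟨hbc, nbc⟩⟩)
  refine ⟨hiff, fun hcf => ?_⟩
  set n := Fintype.card V with hn
  set S : Set ℕ := {k : ℕ | ∃ M : Finset (Sym2 V), M.card = k ∧ (↑M : Set (Sym2 V)) ⊆ Gᶜ.edgeSet ∧
    (↑M : Set (Sym2 V)).Pairwise fun e e' => ∀ v : V, ¬ (v ∈ e ∧ v ∈ e')} with hS
  have hS0 : (0 : ℕ) ∈ S := ⟨∅, by simp⟩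
  have hSbdd : BddAbove S := by
    refine ⟨Fintype.card (Sym2 V), fun k hk => ?_⟩
    obtain ⟨M, hMc, -, -⟩ := hk
    exact hMc ▸ Finset.card_le_univ M
  have hν : matchingNumber Gᶜ ∈ S := Nat.sSup_mem ⟨0, hS0⟩ hSbdd
  set ν := matchingNumber Gᶜ with hνdef
  obtain ⟨M, hMcard, hMsub, hMpair⟩ := hν
  -- upper bound : G is colorable with n - ν colors
  have hupper : G.chromaticNumber ≤ ((n - ν : ℕ) : ℕ∞) := by
    have hex : ∀ v : V, (∃ e ∈ M, v ∈ e) ∨ ¬ (∃ e ∈ M, v ∈ e) := fun v => em _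
    set c : V → Sym2 V := fun v => if h : ∃ e ∈ M, v ∈ e then h.choose else Sym2.mk v v
      with hc
    have hcA : ∀ (v : V) (e : Sym2 V), e ∈ M → v ∈ e → c v = e := by
      intro v e he hv
      have h : ∃ e ∈ M, v ∈ e := ⟨e, he, hv⟩
      have hch := h.choose_spec
      rw [hc]; simp only [dif_pos h]
      by_contra hne
      exact hMpair (Finset.mem_coe.2 hch.1) (Finset.mem_coe.2 he) hne v ⟨hch.2, hv⟩
    have hcun : ∀ v : V, ¬ (∃ e ∈ M, v ∈ e) → c v = Sym2.mk v v := by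
      intro v h; rw [hc]; simp only [dif_neg h]
    have hproper : ∀ u v : V, G.Adj u v → c u ≠ c v := by
      intro u v huv hcuv
      by_cases hu : ∃ e ∈ M, u ∈ e
      · obtain ⟨e, he, hue⟩ := hu
        have hcu : c u = e := hcA u e he hue
        have hediag : ¬ e.IsDiag := Gᶜ.not_isDiag_of_mem_edgeSet (hMsub (Finset.mem_coe.2 he))
        by_cases hv : ∃ e' ∈ M, v ∈ e'
        · obtain ⟨e', he', hve⟩ := hv
          have hcv : c v = e' := hcA v e' he' hve
          have hee : e = e' := by rw [← hcu, ← hcv, hcuv]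
          subst hee
          have : e = Sym2.mk u v := (Sym2.mem_and_mem_iff huv.ne).1 ⟨hue, hve⟩
          have hadj : Gᶜ.Adj u v := (Gᶜ.mem_edgeSet).1 (this ▸ hMsub (Finset.mem_coe.2 he))
          exact hadj.2 huv
        · have hcv := hcun v hv
          rw [hcu, hcv] at hcuv
          exact hediag (hcuv ▸ Sym2.mk_isDiag_iff |>.2 rfl)
      · have hcu := hcun u hu
        by_cases hv : ∃ e' ∈ M, v ∈ e'
        · obtain ⟨e', he', hve⟩ := hv
          have hcv : c v = e' := hcA v e' he' hve
          have hediag : ¬ e'.IsDiag := Gᶜ.not_isDiag_of_mem_edgeSet (hMsub (Finset.mem_coe.2 he'))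
          rw [hcu, hcv] at hcuv
          exact hediag (hcuv ▸ Sym2.mk_isDiag_iff |>.2 rfl)
        · have hcv := hcun v hv
          rw [hcu, hcv] at hcuv
          have : u = v := by
            have := Sym2.eq_iff.1 hcuv
            tauto
          exact huv.ne this
    set t : Finset (Sym2 V) := Finset.univ.image c with ht
    have hcol : G.Colorable t.card := by
      have : Fintype.card {x // x ∈ t} = t.card := Fintype.card_coe t
      rw [← this]
      exact (SimpleGraph.Coloring.mk
        (fun v => (⟨c v, Finset.mem_image_of_mem c (Finset.mem_univ v)⟩ : {x // x ∈ t}))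
        (fun {u v} huv => by
          simp only [Ne, Subtype.mk_eq_mk]
          exact hproper u v huv)).colorable
    have hMt : M ⊆ t := by
      intro e he
      have hediag : ¬ e.IsDiag := Gᶜ.not_isDiag_of_mem_edgeSet (hMsub (Finset.mem_coe.2 he))
      induction e with
      | _ a b =>
        have : c a = Sym2.mk a b := hcA a _ he (Sym2.mem_mk_left a b)
        exact this ▸ Finset.mem_image_of_mem c (Finset.mem_univ a)
    have hcount : t.card + M.card ≤ n := by
      have hfib : (Finset.univ : Finset V).card =
          ∑ b ∈ t, (Finset.univ.filter fun v => c v = b).card :=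
        Finset.card_eq_sum_card_fiberwise (fun v _ => Finset.mem_image_of_mem c (Finset.mem_univ v))
      have h2 : ∀ b ∈ M, 2 ≤ (Finset.univ.filter fun v => c v = b).card := by
        intro e he
        have hediag : ¬ e.IsDiag := Gᶜ.not_isDiag_of_mem_edgeSet (hMsub (Finset.mem_coe.2 he))
        induction e with
        | _ a b =>
          have hane : a ≠ b := by
            intro hab
            apply hediag
            rw [hab]
            exact Sym2.mk_isDiag_iff.2 rfl
          have hca : c a = Sym2.mk a b := hcA a _ he (Sym2.mem_mk_left a b)
          have hcb : c b = Sym2.mk a b := hcA b _ he (Sym2.mem_mk_right a b)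
          have : ({a, b} : Finset V) ⊆ Finset.univ.filter fun v => c v = Sym2.mk a b := by
            intro x hx
            rcases Finset.mem_insert.1 hx with h | h
            · subst h; exact Finset.mem_filter.2 ⟨Finset.mem_univ _, hca⟩
            · rw [Finset.mem_singleton] at h; subst h
              exact Finset.mem_filter.2 ⟨Finset.mem_univ _, hcb⟩
          calc 2 = ({a, b} : Finset V).card := (Finset.card_pair hane).symm
            _ ≤ _ := Finset.card_le_card this
      have h1 : ∀ b ∈ t \ M, 1 ≤ (Finset.univ.filter fun v => c v = b).card := by
        intro b hb
        obtain ⟨v, -, hv⟩ := Finset.mem_image.1 (Finset.mem_sdiff.1 hb).1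
        exact Finset.card_pos.2 ⟨v, Finset.mem_filter.2 ⟨Finset.mem_univ _, hv⟩⟩
      calc t.card + M.card ≤ ∑ b ∈ t, (Finset.univ.filter fun v => c v = b).card :=
            card_add_card_le_sum hMt _ h2 h1
        _ = n := hfib.symm
    have : t.card ≤ n - ν := by omega
    exact (hcol.mono this).chromaticNumber_le
  -- lower bound
  have hχfin : G.Colorable (ENat.toNat G.chromaticNumber) :=
    G.colorable_chromaticNumber_of_fintype
  have hlower : ∀ m : ℕ, G.Colorable m → n - ν ≤ m := by
    intro m hm
    obtain ⟨C⟩ := hm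
    set fib : Fin m → Finset V := fun b => Finset.univ.filter fun v => C v = b with hfibdef
    have hfibsize : ∀ b : Fin m, (fib b).card ≤ 2 := by
      intro b
      by_contra hgt
      push_neg at hgt
      obtain ⟨s, hs, hscard⟩ := Finset.exists_subset_card_eq hgt
      refine hcf s ⟨?_, hscard⟩
      intro x hx y hy hxy
      have hcx : C x = b := (Finset.mem_filter.1 (hs hx)).2
      have hcy : C y = b := (Finset.mem_filter.1 (hs hy)).2
      refine ⟨hxy, fun hadj => ?_⟩
      exact C.valid hadj (hcx.trans hcy.symm)
    set t : Finset (Fin m) := Finset.univ.image C with ht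
    set t2 : Finset (Fin m) := t.filter fun b => 2 ≤ (fib b).card with ht2
    set M' : Finset (Sym2 V) := Finset.univ.filter fun e =>
      e ∈ Gᶜ.edgeSet ∧ ∀ u ∈ e, ∀ v ∈ e, C u = C v with hM'
    have hM'mem : M'.card ∈ S := by
      refine ⟨M', rfl, ?_, ?_⟩
      · intro e he
        exact ((Finset.mem_filter.1 (Finset.mem_coe.1 he)).2).1
      · intro e he e' he' hne v hv
        obtain ⟨hee, hcolore⟩ := (Finset.mem_filter.1 (Finset.mem_coe.1 he)).2
        obtain ⟨hee', hcolore'⟩ := (Finset.mem_filter.1 (Finset.mem_coe.1 he')).2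
        obtain ⟨hv1, hv2⟩ := hv
        obtain ⟨x, hex⟩ := Sym2.mem_iff_exists.1 hv1
        obtain ⟨y, hey⟩ := Sym2.mem_iff_exists.1 hv2
        have hvx : v ≠ x := by
          intro h
          apply Gᶜ.not_isDiag_of_mem_edgeSet hee
          rw [hex, ← h]
          exact Sym2.mk_isDiag_iff.2 rfl
        have hvy : v ≠ y := by
          intro h
          apply Gᶜ.not_isDiag_of_mem_edgeSet hee'
          rw [hey, ← h]
          exact Sym2.mk_isDiag_iff.2 rfl
        have hxy : x ≠ y := by
          intro h
          exact hne (by rw [hex, hey, h])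
        have hcx : C x = C v := hcolore x (hex ▸ Sym2.mem_mk_right v x) v (hex ▸ Sym2.mem_mk_left v x)
        have hcy : C y = C v := hcolore' y (hey ▸ Sym2.mem_mk_right v y) v (hey ▸ Sym2.mem_mk_left v y)
        refine hcf {v, x, y} (is3Clique_triple_iff.2 ⟨⟨hvx, fun h => C.valid h hcx.symm⟩,
          ⟨hvy, fun h => C.valid h hcy.symm⟩,
          ⟨hxy, fun h => C.valid h (hcx.trans hcy.symm)⟩⟩)
    have hM'le : M'.card ≤ ν := le_csSup hSbdd hM'mem
    have ht2le : t2.card ≤ M'.card := by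
      rcases Finset.eq_empty_or_nonempty t2 with h | h
      · simp [h]
      · obtain ⟨b0, hb0⟩ := h
        have hVne : Nonempty V := by
          have h2 : 2 ≤ (fib b0).card := (Finset.mem_filter.1 hb0).2
          obtain ⟨v, hv⟩ := Finset.card_pos.1 (lt_of_lt_of_le two_pos h2)
          exact ⟨v⟩
        have hchoice : ∀ b : Fin m, ∃ p : V × V, b ∈ t2 →
            p.1 ≠ p.2 ∧ C p.1 = b ∧ C p.2 = b := by
          intro b
          by_cases hb : b ∈ t2
          · have h2 : 2 ≤ (fib b).card := (Finset.mem_filter.1 hb).2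
            obtain ⟨x, hx, y, hy, hxy⟩ := Finset.one_lt_card.1 (lt_of_lt_of_le one_lt_two h2)
            exact ⟨(x, y), fun _ => ⟨hxy, (Finset.mem_filter.1 hx).2, (Finset.mem_filter.1 hy).2⟩⟩
          · exact ⟨(Classical.arbitrary V, Classical.arbitrary V), fun h => absurd h hb⟩
        choose p hp using hchoice
        refine Finset.card_le_card_of_injOn (fun b => Sym2.mk (p b).1 (p b).2) ?_ ?_
        · intro b hb
          obtain ⟨hne, hc1, hc2⟩ := hp b hb
          refine Finset.mem_filter.2 ⟨Finset.mem_univ _, ?_, ?_⟩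
          · exact (Gᶜ.mem_edgeSet).2 ⟨hne, fun h => C.valid h (hc1.trans hc2.symm)⟩
          · intro u hu v hv
            rcases Sym2.mem_iff.1 hu with h | h <;> rcases Sym2.mem_iff.1 hv with h' | h' <;>
              subst h <;> subst h' <;> simp [hc1, hc2, hc1.trans hc2.symm]
        · intro b hb b' hb' heq
          obtain ⟨-, hc1, -⟩ := hp b hb
          obtain ⟨-, hc1', hc2'⟩ := hp b' hb'
          have heq' : Sym2.mk (p b).1 (p b).2 = Sym2.mk (p b').1 (p b').2 := heq
          have : (p b).1 ∈ Sym2.mk (p b').1 (p b').2 := by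
            rw [← heq']
            exact Sym2.mem_mk_left _ _
          rcases Sym2.mem_iff.1 this with h | h
          · rw [← hc1, h, hc1']
          · rw [← hc1, h, hc2']
    have hcount : n ≤ t.card + t2.card := by
      have hfib : (Finset.univ : Finset V).card = ∑ b ∈ t, (fib b).card :=
        Finset.card_eq_sum_card_fiberwise (fun v _ => Finset.mem_image_of_mem C (Finset.mem_univ v))
      have h2 : ∀ b ∈ t2, (fib b).card ≤ 2 := fun b _ => hfibsize b
      have h1 : ∀ b ∈ t \ t2, (fib b).card ≤ 1 := by
        intro b hb
        obtain ⟨hbt, hbn2⟩ := Finset.mem_sdiff.1 hb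
        have : ¬ 2 ≤ (fib b).card := fun h => hbn2 (Finset.mem_filter.2 ⟨hbt, h⟩)
        omega
      calc n = ∑ b ∈ t, (fib b).card := hfib
        _ ≤ t.card + t2.card := sum_le_card_add_card (Finset.filter_subset _ _) _ h2 h1
    have htle : t.card ≤ m := by
      calc t.card ≤ (Finset.univ : Finset (Fin m)).card := Finset.card_le_univ t
        _ = m := by simp
    omega
  have hfin : G.chromaticNumber ≠ ⊤ := by
    intro h
    rw [h] at hupper
    exact (by simp : ¬ (⊤ : ℕ∞) ≤ ((n - ν : ℕ) : ℕ∞)) hupper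
  have hχeq : G.chromaticNumber = ((ENat.toNat G.chromaticNumber : ℕ) : ℕ∞) :=
    (ENat.coe_toNat hfin).symm
  have hlow := hlower _ hχfin
  rw [hχeq]
  rw [hχeq] at hupper
  have : ENat.toNat G.chromaticNumber = n - ν := by
    have := Nat.cast_le (α := ℕ∞) |>.1 hupper
    omega
  rw [this]
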